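/- arXiv:1611.08626 — 2 statements merged into one kernel-verified Lean document; each statement's English description precedes it below -/
import Mathlib

section
/- Let K, Ω, γ : ℝ → ℝ³ be differentiable functions satisfying the ODEs K̇ = K×Ω − mr²κ γ×Ω + mrκ² γ×X, Ẋ = (κγ − Ω)×X + rΩ×γ, γ̇ = γ×Ω. Then t ↦ K(t)·γ(t) is constant. -/
open Matrix

lemma dot_hasDerivAt {f g : ℝ → (Fin 3 → ℝ)} {f' g' : Fin 3 → ℝ} {t : ℝ}
    (hf : HasDerivAt f f' t) (hg : HasDerivAt g g' t) :
    HasDerivAt (fun t => f t ⬝ᵥ g t) (f' ⬝ᵥ g t + f t ⬝ᵥ g') t := by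
  have hf' := hasDerivAt_pi.mp hf
  have hg' := hasDerivAt_pi.mp hg
  have : HasDerivAt (fun t => ∑ i, f t i * g t i)
      (∑ i, (f' i * g t i + f t i * g' i)) t :=
    HasDerivAt.fun_sum (fun i _ => (hf' i).mul (hg' i))
  simpa [dotProduct, Finset.sum_add_distrib, mul_comm] using this

/-- Along the reduced Chaplygin-ball equations, `K·γ` is conserved. -/
theorem stmt_11 (m r κ : ℝ) (K X γ Ω : ℝ → (Fin 3 → ℝ))
    (hK : ∀ t, HasDerivAt K
      (K t ⨯₃ Ω t - (m * r ^ 2 * κ) • (γ t ⨯₃ Ω t) + (m * r * κ ^ 2) • (γ t ⨯₃ X t)) t)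
    (hX : ∀ t, HasDerivAt X ((κ • γ t - Ω t) ⨯₃ X t + r • (Ω t ⨯₃ γ t)) t)
    (hγ : ∀ t, HasDerivAt γ (γ t ⨯₃ Ω t) t) :
    ∀ t s, K t ⬝ᵥ γ t = K s ⬝ᵥ γ s := by
  have key : ∀ t, HasDerivAt (fun t => K t ⬝ᵥ γ t) 0 t := by
    intro t
    have h := dot_hasDerivAt (hK t) (hγ t)
    have hz : (K t ⨯₃ Ω t - (m * r ^ 2 * κ) • (γ t ⨯₃ Ω t) + (m * r * κ ^ 2) • (γ t ⨯₃ X t)) ⬝ᵥ γ t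
        + K t ⬝ᵥ (γ t ⨯₃ Ω t) = 0 := by
      simp [crossProduct, dotProduct, Fin.sum_univ_three]
      ring
    rwa [hz] at h
  exact is_const_of_deriv_eq_zero (fun t => (key t).differentiableAt)
    (fun t => (key t).deriv)
end

section
/- Let E : ℝ → ℝ be constant (conserved) and suppose E(t) = ½ K(t)·Ω(t) + c₁(t) − κ K(t)·γ(t) + ½mκ²(c₂(t) − ‖x(t)‖²) where K(t)·Ω(t) ≥ 0, and c₁, c₂, K·γ, and K·Ω-related terms satisfy: ρ, γ are bounded (|c₁(t)| ≤ C, |c₂(t)| ≤ C, |K(t)·γ(t)| ≤ C‖Ω(t)‖ + C for some constant C), and K(t)·Ω(t) ≤ C'‖Ω(t)‖² for a constant C'. If ‖x(t_k)‖ → ∞ along some sequence t_k → ∞ and κ ≠ 0, m > 0, then limsup_{t→∞} ‖Ω(t)‖ = ∞. -/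
open Filter

/-- Conservation of the moving energy with bounded coefficients forces unbounded angular
velocity along unbounded motions. -/
theorem stmt_14 (m κ C C' c : ℝ) (hm : 0 < m) (hκ : κ ≠ 0) (hc : 0 < c)
    (E Ωn xn KΩ Kγ c₁ c₂ : ℝ → ℝ)
    (hE : ∀ t s, E t = E s)
    (hform : ∀ t, E t = (1 / 2) * KΩ t + c₁ t - κ * Kγ t
      + (1 / 2) * m * κ ^ 2 * (c₂ t - (xn t) ^ 2))
    (hKΩ0 : ∀ t, 0 ≤ KΩ t)
    (hΩ0 : ∀ t, 0 ≤ Ωn t)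
    (hc₁ : ∀ t, |c₁ t| ≤ C) (hc₂ : ∀ t, |c₂ t| ≤ C)
    (hKγ : ∀ t, |Kγ t| ≤ C * Ωn t + C)
    (hKup : ∀ t, KΩ t ≤ C' * (Ωn t) ^ 2)
    (hKlow : ∀ t, c * (Ωn t) ^ 2 ≤ (1 / 2) * KΩ t)
    (tk : ℕ → ℝ) (htk : Tendsto tk atTop atTop)
    (hx : Tendsto (fun k => xn (tk k)) atTop atTop) :
    ∀ M T : ℝ, ∃ t, T ≤ t ∧ M < Ωn t := by
  intro M T
  by_contra h
  push_neg at h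
  set M' := max M 0 with hM'
  have hΩle : ∀ t, T ≤ t → Ωn t ≤ M' := fun t ht => (h t ht).trans (le_max_left _ _)
  have hκ2 : 0 < m * κ ^ 2 := by positivity
  set B2 : ℝ := (2 * ((1/2) * |C'| * M' ^ 2 + |C| + |κ| * (|C| * M' + |C|)
      + (1/2) * m * κ ^ 2 * |C| + |E 0|)) / (m*κ^2) with hB2
  have hbound : ∀ t, T ≤ t → (xn t)^2 ≤ B2 := by
    intro t ht
    have h1 := hform t
    rw [hE t 0] at h1
    have hΩM := hΩle t ht
    have hΩ0' := hΩ0 t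
    have hM0 : (0:ℝ) ≤ M' := le_max_right _ _
    have hΩsq : (Ωn t)^2 ≤ M'^2 := by nlinarith
    have hK : (1/2) * KΩ t ≤ (1/2) * |C'| * M' ^ 2 := by
      have h2 : KΩ t ≤ |C'| * M' ^ 2 := by
        have := hKup t
        nlinarith [le_abs_self C', sq_nonneg (Ωn t), abs_nonneg C']
      linarith
    have h3 : c₁ t ≤ |C| := (abs_le.mp (hc₁ t)).2.trans (le_abs_self C)
    have h4 : -(κ * Kγ t) ≤ |κ| * (|C| * M' + |C|) := by
      have h41 : -(κ * Kγ t) ≤ |κ| * |Kγ t| := by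
        rw [← abs_mul]; exact neg_le_abs _
      have h42 : |Kγ t| ≤ |C| * M' + |C| := by
        have := hKγ t
        nlinarith [le_abs_self C, abs_nonneg C]
      calc -(κ * Kγ t) ≤ |κ| * |Kγ t| := h41
        _ ≤ |κ| * (|C| * M' + |C|) := by
            exact mul_le_mul_of_nonneg_left h42 (abs_nonneg _)
    have h5 : (1/2)*m*κ^2 * c₂ t ≤ (1/2) * m * κ ^ 2 * |C| := by
      have : c₂ t ≤ |C| := (abs_le.mp (hc₂ t)).2.trans (le_abs_self C)
      nlinarith
    have h6 : -(E 0) ≤ |E 0| := neg_le_abs _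
    rw [hB2, le_div_iff₀ hκ2]
    nlinarith
  have hev1 : ∀ᶠ k in atTop, T ≤ tk k := htk.eventually_ge_atTop T
  have hev2 : ∀ᶠ k in atTop, max 1 B2 + 1 ≤ xn (tk k) :=
    hx.eventually_ge_atTop (max 1 B2 + 1)
  obtain ⟨k, hk1, hk2⟩ := (hev1.and hev2).exists
  have hb := hbound (tk k) hk1
  have h1 : (1:ℝ) ≤ xn (tk k) := by
    have := le_max_left 1 B2; linarith
  have h2 : B2 + 1 ≤ xn (tk k) := by
    have := le_max_right 1 B2; linarith
  nlinarith
end
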